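/- Let f : ℝ^d → ℝ^d be odd with f(0) = 0 and one-sided Lipschitz with constant L_f ∈ ℝ; let u be such that x ↦ u(x, μ) is one-sided Lipschitz with constant L_u ∈ ℝ for every probability measure μ and satisfies the coercivity bound ⟨y, u(y, μ^a)⟩ ≤ C_u + (L_u + 1/2)|y|² + (L_ũ/N) ∑_{j=1}^N |a_j|² for all y ∈ ℝ^d and all N-tuples a ∈ (ℝ^d)^N, with C_u ≥ 0 and L_ũ ≥ 0. Set ζ := max{2(L_f + L_u), 4 L_f⁺ + 2 L_u + 2 L_ũ + 1, 0} with L_f⁺ := max{L_f, 0}, and fix ξ ∈ (0, 1) and an integer p ≥ 1. Then there exists a constant C ≥ 0, depending only on L_f, L_u, L_ũ, C_u, p and ξ (in particular not on N or h), such that for every N ≥ 1, every h ∈ (0, 1] with ζh ≤ ξ, every implicit Euler step pair (X, Y) in (ℝ^d)^N and every i ∈ {1, …, N}: 4^p (1/N) ∑_{j=1}^N |Y_i − Y_j|^{2p} + 4^p ( (1/N) ∑_{j=1}^N (1 + |Y_j|²) )^p + 1 ≤ (1 + C h) [ 4^p (1/N) ∑_{j=1}^N |X_i − X_j|^{2p}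 + 4^p ( (1/N) ∑_{j=1}^N (1 + |X_j|²) )^p + 1 ]. -/

import Mathlib

open RealInnerProductSpace MeasureTheory

/-- The empirical measure `μ^a := (1/N) ∑_{j=1}^N δ_{a_j}` of an `N`-tuple of points. -/
noncomputable def empMeas {d N : ℕ} (a : Fin N → EuclideanSpace ℝ (Fin d)) :
    Measure (EuclideanSpace ℝ (Fin d)) :=
  (N : ENNReal)⁻¹ • ∑ j, Measure.dirac (a j)

/-- The interaction drift `v` evaluated along an empirical measure:
`v(x, μ^a) = u(x, μ^a) + (1/N) ∑_j f(x − a_j)`. -/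
noncomputable def vEmp {d N : ℕ}
    (f : EuclideanSpace ℝ (Fin d) → EuclideanSpace ℝ (Fin d))
    (u : EuclideanSpace ℝ (Fin d) → Measure (EuclideanSpace ℝ (Fin d)) →
      EuclideanSpace ℝ (Fin d))
    (x : EuclideanSpace ℝ (Fin d)) (a : Fin N → EuclideanSpace ℝ (Fin d)) :
    EuclideanSpace ℝ (Fin d) :=
  u x (empMeas a) + (N : ℝ)⁻¹ • ∑ j, f (x - a j)

/-- `(X, Y)` is an implicit Euler step pair with step size `h` if
`Yᵢ = Xᵢ + h·v(Yᵢ, μ^Y)` for every `i`. -/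
def IsImplicitPair {d N : ℕ}
    (f : EuclideanSpace ℝ (Fin d) → EuclideanSpace ℝ (Fin d))
    (u : EuclideanSpace ℝ (Fin d) → Measure (EuclideanSpace ℝ (Fin d)) →
      EuclideanSpace ℝ (Fin d))
    (h : ℝ) (X Y : Fin N → EuclideanSpace ℝ (Fin d)) : Prop :=
  ∀ i, Y i = X i + h • vEmp f u (Y i) Y


section AuxLemmas

lemma aux_pow_bound (D : ℝ) (hD : 0 ≤ D) (p : ℕ) :
    ∀ h : ℝ, 0 ≤ h → h ≤ 1 → (1 + D * h) ^ p ≤ 1 + ((1 + D) ^ p - 1) * h := by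
  induction p with
  | zero => intro h h0 h1; simp
  | succ p ih =>
    intro h h0 h1
    have hip := ih h h0 h1
    have h1D : (1:ℝ) ≤ (1 + D) ^ p := one_le_pow₀ (by linarith)
    have hnn : (0:ℝ) ≤ 1 + D * h := by nlinarith
    have key : 0 ≤ D * h * (((1 + D) ^ p - 1) * (1 - h)) :=
      mul_nonneg (mul_nonneg hD h0) (mul_nonneg (by linarith) (by linarith))
    calc (1 + D * h) ^ (p + 1) = (1 + D * h) ^ p * (1 + D * h) := by ring
      _ ≤ (1 + ((1 + D) ^ p - 1) * h) * (1 + D * h) := by nlinarith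
      _ ≤ 1 + ((1 + D) ^ p * (1 + D) - 1) * h := by nlinarith [key]
      _ = 1 + ((1 + D) ^ (p + 1) - 1) * h := by rw [pow_succ]

lemma aux_norm_sub_sq (E : Type*) [NormedAddCommGroup E] [InnerProductSpace ℝ E] (x y : E) :
    ‖x - y‖ ^ 2 ≤ 2 * ‖x‖ ^ 2 + 2 * ‖y‖ ^ 2 := by
  have h := pow_le_pow_left₀ (norm_nonneg (x - y)) (norm_sub_le x y) 2
  nlinarith [sq_nonneg (‖x‖ - ‖y‖)]

lemma empMeas_isProb {d N : ℕ} (hN : N ≠ 0) (a : Fin N → EuclideanSpace ℝ (Fin d)) :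
    IsProbabilityMeasure (empMeas a) := by
  constructor
  simp [empMeas, Measure.smul_apply, Measure.finset_sum_apply, smul_eq_mul]
  rw [ENNReal.inv_mul_cancel] <;> simp [hN]

lemma vEmp_diff_bound {d N : ℕ} (hN : 1 ≤ N)
    (f : EuclideanSpace ℝ (Fin d) → EuclideanSpace ℝ (Fin d))
    (u : EuclideanSpace ℝ (Fin d) → Measure (EuclideanSpace ℝ (Fin d)) →
      EuclideanSpace ℝ (Fin d)) (Lf Lu : ℝ)
    (hf : ∀ z z' : EuclideanSpace ℝ (Fin d), ⟪z - z', f z - f z'⟫ ≤ Lf * ‖z - z'‖ ^ 2)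
    (hu : ∀ μ : Measure (EuclideanSpace ℝ (Fin d)), IsProbabilityMeasure μ →
      ∀ x x' : EuclideanSpace ℝ (Fin d), ⟪x - x', u x μ - u x' μ⟫ ≤ Lu * ‖x - x'‖ ^ 2)
    (Y : Fin N → EuclideanSpace ℝ (Fin d)) (j k : Fin N) :
    ⟪Y j - Y k, vEmp f u (Y j) Y - vEmp f u (Y k) Y⟫ ≤ (Lf + Lu) * ‖Y j - Y k‖ ^ 2 := by
  have hNne : (N : ℝ) ≠ 0 := Nat.cast_ne_zero.mpr (by omega)
  have hNpos : (0:ℝ) < N := by positivity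
  have e1 : vEmp f u (Y j) Y - vEmp f u (Y k) Y =
      (u (Y j) (empMeas Y) - u (Y k) (empMeas Y))
        + (N : ℝ)⁻¹ • ∑ l, (f (Y j - Y l) - f (Y k - Y l)) := by
    simp only [vEmp, Finset.sum_sub_distrib, smul_sub]; abel
  rw [e1, inner_add_right, real_inner_smul_right, inner_sum]
  have hsum : ∑ l, ⟪Y j - Y k, f (Y j - Y l) - f (Y k - Y l)⟫
      ≤ (N : ℝ) * (Lf * ‖Y j - Y k‖ ^ 2) := by
    calc ∑ l, ⟪Y j - Y k, f (Y j - Y l) - f (Y k - Y l)⟫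
        ≤ ∑ _l : Fin N, Lf * ‖Y j - Y k‖ ^ 2 := by
          refine Finset.sum_le_sum fun l _ => ?_
          have := hf (Y j - Y l) (Y k - Y l)
          rwa [sub_sub_sub_cancel_right] at this
      _ = (N : ℝ) * (Lf * ‖Y j - Y k‖ ^ 2) := by
          simp [Finset.sum_const, Finset.card_univ, nsmul_eq_mul]
  have huu := hu _ (empMeas_isProb (by omega) Y) (Y j) (Y k)
  have h2 : (N : ℝ)⁻¹ * ∑ l, ⟪Y j - Y k, f (Y j - Y l) - f (Y k - Y l)⟫
      ≤ Lf * ‖Y j - Y k‖ ^ 2 := by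
    have := mul_le_mul_of_nonneg_left hsum (inv_nonneg.mpr hNpos.le)
    rwa [← mul_assoc, inv_mul_cancel₀ hNne, one_mul] at this
  linarith

lemma vEmp_coercive {d N : ℕ} (hN : 1 ≤ N)
    (f : EuclideanSpace ℝ (Fin d) → EuclideanSpace ℝ (Fin d))
    (u : EuclideanSpace ℝ (Fin d) → Measure (EuclideanSpace ℝ (Fin d)) →
      EuclideanSpace ℝ (Fin d)) (Lf Lu Lut Cu : ℝ)
    (hodd : ∀ z : EuclideanSpace ℝ (Fin d), f (-z) = -f z)
    (hf0 : f 0 = 0)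
    (hf : ∀ z z' : EuclideanSpace ℝ (Fin d), ⟪z - z', f z - f z'⟫ ≤ Lf * ‖z - z'‖ ^ 2)
    (hucoer : ∀ (M : ℕ) (y : EuclideanSpace ℝ (Fin d))
        (a : Fin M → EuclideanSpace ℝ (Fin d)),
      ⟪y, u y (empMeas a)⟫ ≤ Cu + (Lu + 1 / 2) * ‖y‖ ^ 2 + Lut / M * ∑ j, ‖a j‖ ^ 2)
    (Y : Fin N → EuclideanSpace ℝ (Fin d)) :
    ∑ j, ⟪Y j, vEmp f u (Y j) Y⟫ ≤
      (N : ℝ) * Cu + (2 * max Lf 0 + Lu + Lut + 1/2) * ∑ j, ‖Y j‖ ^ 2 := by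
  have hNne : (N : ℝ) ≠ 0 := Nat.cast_ne_zero.mpr (by omega)
  have hNpos : (0:ℝ) < N := by positivity
  set B := ∑ j, ‖Y j‖ ^ 2 with hB
  have hB0 : 0 ≤ B := Finset.sum_nonneg fun j _ => by positivity
  have e : ∀ j, ⟪Y j, vEmp f u (Y j) Y⟫ =
      ⟪Y j, u (Y j) (empMeas Y)⟫ + (N : ℝ)⁻¹ * ∑ k, ⟪Y j, f (Y j - Y k)⟫ := by
    intro j
    simp only [vEmp, inner_add_right, real_inner_smul_right, inner_sum]
  set S := ∑ j, ∑ k, ⟪Y j, f (Y j - Y k)⟫ with hS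
  have hswap : S = - ∑ j, ∑ k, ⟪Y k, f (Y j - Y k)⟫ := by
    calc S = ∑ k, ∑ j, ⟪Y j, f (Y j - Y k)⟫ := Finset.sum_comm
      _ = ∑ j, ∑ k, ⟪Y k, f (Y k - Y j)⟫ := rfl
      _ = ∑ j, ∑ k, -⟪Y k, f (Y j - Y k)⟫ := by
          refine Finset.sum_congr rfl fun j _ => Finset.sum_congr rfl fun k _ => ?_
          rw [← neg_sub (Y j) (Y k), hodd, inner_neg_right]
      _ = - ∑ j, ∑ k, ⟪Y k, f (Y j - Y k)⟫ := by
          simp [Finset.sum_neg_distrib]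
  have h2S : 2 * S = ∑ j, ∑ k, ⟪Y j - Y k, f (Y j - Y k)⟫ := by
    have expand : ∑ j, ∑ k, ⟪Y j - Y k, f (Y j - Y k)⟫
        = ∑ j, ∑ k, ⟪Y j, f (Y j - Y k)⟫ - ∑ j, ∑ k, ⟪Y k, f (Y j - Y k)⟫ := by
      simp [inner_sub_left, Finset.sum_sub_distrib]
    rw [expand]; linarith
  have hzfz : ∀ z : EuclideanSpace ℝ (Fin d), ⟪z, f z⟫ ≤ Lf * ‖z‖ ^ 2 := by
    intro z
    have := hf z 0
    simpa [hf0] using this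
  have hSbound : S ≤ 2 * max Lf 0 * ((N : ℝ) * B) := by
    have hterm : ∀ j k : Fin N, ⟪Y j - Y k, f (Y j - Y k)⟫
        ≤ max Lf 0 * (2 * ‖Y j‖ ^ 2 + 2 * ‖Y k‖ ^ 2) := by
      intro j k
      have h1 := hzfz (Y j - Y k)
      have h2 : Lf * ‖Y j - Y k‖ ^ 2 ≤ max Lf 0 * ‖Y j - Y k‖ ^ 2 :=
        mul_le_mul_of_nonneg_right (le_max_left _ _) (by positivity)
      have h3 : max Lf 0 * ‖Y j - Y k‖ ^ 2 ≤ max Lf 0 * (2 * ‖Y j‖ ^ 2 + 2 * ‖Y k‖ ^ 2) :=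
        mul_le_mul_of_nonneg_left (aux_norm_sub_sq _ (Y j) (Y k)) (le_max_right _ _)
      linarith
    have hsum : ∑ j, ∑ k, ⟪Y j - Y k, f (Y j - Y k)⟫
        ≤ ∑ j : Fin N, ∑ k : Fin N, max Lf 0 * (2 * ‖Y j‖ ^ 2 + 2 * ‖Y k‖ ^ 2) :=
      Finset.sum_le_sum fun j _ => Finset.sum_le_sum fun k _ => hterm j k
    have hval : ∑ j : Fin N, ∑ k : Fin N, max Lf 0 * (2 * ‖Y j‖ ^ 2 + 2 * ‖Y k‖ ^ 2)
        = 4 * max Lf 0 * ((N : ℝ) * B) := by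
      have step1 : ∀ j : Fin N, ∑ k : Fin N, max Lf 0 * (2 * ‖Y j‖ ^ 2 + 2 * ‖Y k‖ ^ 2)
          = max Lf 0 * (2 * (N : ℝ) * ‖Y j‖ ^ 2 + 2 * B) := by
        intro j
        rw [← Finset.mul_sum]
        congr 1
        rw [Finset.sum_add_distrib, Finset.sum_const, Finset.card_univ, Fintype.card_fin,
          nsmul_eq_mul, ← Finset.mul_sum, ← hB]
        ring
      calc ∑ j : Fin N, ∑ k : Fin N, max Lf 0 * (2 * ‖Y j‖ ^ 2 + 2 * ‖Y k‖ ^ 2)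
          = ∑ j : Fin N, max Lf 0 * (2 * (N : ℝ) * ‖Y j‖ ^ 2 + 2 * B) :=
            Finset.sum_congr rfl fun j _ => step1 j
        _ = 4 * max Lf 0 * ((N : ℝ) * B) := by
            rw [← Finset.mul_sum, Finset.sum_add_distrib, Finset.sum_const, Finset.card_univ,
              Fintype.card_fin, nsmul_eq_mul]
            rw [show ∑ j : Fin N, 2 * (N : ℝ) * ‖Y j‖ ^ 2 = 2 * (N : ℝ) * ∑ j, ‖Y j‖ ^ 2
              from by rw [Finset.mul_sum], ← hB]
            ring
    linarith [h2S, hsum.trans_eq hval]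
  have ecoer : ∀ j, ⟪Y j, u (Y j) (empMeas Y)⟫
      ≤ Cu + (Lu + 1/2) * ‖Y j‖ ^ 2 + Lut / N * B := fun j => hucoer N (Y j) Y
  calc ∑ j, ⟪Y j, vEmp f u (Y j) Y⟫
      = (∑ j, ⟪Y j, u (Y j) (empMeas Y)⟫) + (N : ℝ)⁻¹ * S := by
        simp only [e, Finset.sum_add_distrib, hS, Finset.mul_sum]
    _ ≤ (∑ j : Fin N, (Cu + (Lu + 1/2) * ‖Y j‖ ^ 2 + Lut / N * B))
          + (N : ℝ)⁻¹ * (2 * max Lf 0 * ((N : ℝ) * B)) := by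
        exact add_le_add (Finset.sum_le_sum fun j _ => ecoer j)
          (mul_le_mul_of_nonneg_left hSbound (inv_nonneg.mpr hNpos.le))
    _ = (N : ℝ) * Cu + (2 * max Lf 0 + Lu + Lut + 1/2) * B := by
        rw [Finset.sum_add_distrib, Finset.sum_add_distrib, Finset.sum_const,
          Finset.card_univ, Fintype.card_fin, nsmul_eq_mul, ← Finset.mul_sum,
          Finset.sum_const, Finset.card_univ, Fintype.card_fin, nsmul_eq_mul]
        field_simp
        try ring

end AuxLemmas
set_option maxHeartbeats 2000000 in
/-- One-step contraction of the Lyapunov functional of the split-step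
method: there is `C ≥ 0` (depending only on the constants and `ξ`, not on `N` or `h`) such
that for every `N ≥ 1`, every `h ∈ (0,1]` with `ζh ≤ ξ`, every implicit Euler step pair
`(X, Y)` and every `i`, `H^{Y,p}_i ≤ (1 + Ch) H^{X,p}_i`. -/
theorem lyapunov_one_step_bound (d : ℕ) (hd : 1 ≤ d)
    (f : EuclideanSpace ℝ (Fin d) → EuclideanSpace ℝ (Fin d))
    (u : EuclideanSpace ℝ (Fin d) → Measure (EuclideanSpace ℝ (Fin d)) →
      EuclideanSpace ℝ (Fin d))
    (Lf Lu Lut Cu : ℝ) (hLut : 0 ≤ Lut) (hCu : 0 ≤ Cu)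
    (hodd : ∀ z : EuclideanSpace ℝ (Fin d), f (-z) = -f z)
    (hf0 : f 0 = 0)
    (hf : ∀ z z' : EuclideanSpace ℝ (Fin d), ⟪z - z', f z - f z'⟫ ≤ Lf * ‖z - z'‖ ^ 2)
    (hu : ∀ μ : Measure (EuclideanSpace ℝ (Fin d)), IsProbabilityMeasure μ →
      ∀ x x' : EuclideanSpace ℝ (Fin d), ⟪x - x', u x μ - u x' μ⟫ ≤ Lu * ‖x - x'‖ ^ 2)
    (hucoer : ∀ (N : ℕ) (y : EuclideanSpace ℝ (Fin d))
        (a : Fin N → EuclideanSpace ℝ (Fin d)),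
      ⟪y, u y (empMeas a)⟫ ≤ Cu + (Lu + 1 / 2) * ‖y‖ ^ 2 + Lut / N * ∑ j, ‖a j‖ ^ 2)
    (ξ : ℝ) (hξ0 : 0 < ξ) (hξ1 : ξ < 1) (p : ℕ) (hp : 1 ≤ p) :
    ∃ C : ℝ, 0 ≤ C ∧
      ∀ (N : ℕ), 1 ≤ N → ∀ h : ℝ, 0 < h → h ≤ 1 →
        max (2 * (Lf + Lu)) (max (4 * max Lf 0 + 2 * Lu + 2 * Lut + 1) 0) * h ≤ ξ →
        ∀ X Y : Fin N → EuclideanSpace ℝ (Fin d), IsImplicitPair f u h X Y →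
        ∀ i : Fin N,
          (4 : ℝ) ^ p * ((N : ℝ)⁻¹ * ∑ j, ‖Y i - Y j‖ ^ (2 * p))
              + (4 : ℝ) ^ p * ((N : ℝ)⁻¹ * ∑ j, (1 + ‖Y j‖ ^ 2)) ^ p + 1 ≤
            (1 + C * h) *
              ((4 : ℝ) ^ p * ((N : ℝ)⁻¹ * ∑ j, ‖X i - X j‖ ^ (2 * p))
                + (4 : ℝ) ^ p * ((N : ℝ)⁻¹ * ∑ j, (1 + ‖X j‖ ^ 2)) ^ p + 1) := by
  set ζ := max (2 * (Lf + Lu)) (max (4 * max Lf 0 + 2 * Lu + 2 * Lut + 1) 0) with hζdef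
  have hζ0 : 0 ≤ ζ := le_trans (le_max_right _ 0) (le_max_right _ _)
  have h1ξ : (0:ℝ) < 1 - ξ := by linarith
  set D := (ζ + 2 * Cu) / (1 - ξ) with hDdef
  have hD0 : 0 ≤ D := div_nonneg (by linarith) h1ξ.le
  have hDmul : D * (1 - ξ) = ζ + 2 * Cu := by
    rw [hDdef]; field_simp
  refine ⟨(1 + D) ^ p - 1, by linarith [one_le_pow₀ (by linarith : (1:ℝ) ≤ 1 + D) (n := p)], ?_⟩
  intro N hN h h0 h1 hζh X Y hpair i
  have hNne : (N : ℝ) ≠ 0 := Nat.cast_ne_zero.mpr (by omega)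
  have hNpos : (0:ℝ) < N := by positivity
  have hpos : (0:ℝ) < 1 - ζ * h := by linarith [hζh]
  have hv : ∀ j k, ⟪Y j - Y k, vEmp f u (Y j) Y - vEmp f u (Y k) Y⟫
      ≤ (Lf + Lu) * ‖Y j - Y k‖ ^ 2 := fun j k => vEmp_diff_bound hN f u Lf Lu hf hu Y j k
  have hXeq : ∀ j, X j = Y j - h • vEmp f u (Y j) Y := fun j => eq_sub_of_add_eq (hpair j).symm
  -- pairwise differences contract
  have hdiff : ∀ j k, (1 - ζ * h) * ‖Y j - Y k‖ ^ 2 ≤ ‖X j - X k‖ ^ 2 := by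
    intro j k
    have exy : X j - X k = (Y j - Y k) - h • (vEmp f u (Y j) Y - vEmp f u (Y k) Y) := by
      rw [hXeq j, hXeq k, smul_sub]; abel
    have hexp := norm_sub_sq_real (Y j - Y k) (h • (vEmp f u (Y j) Y - vEmp f u (Y k) Y))
    rw [exy, hexp, real_inner_smul_right]
    have hvjk := hv j k
    have hζge : 2 * (Lf + Lu) ≤ ζ := le_max_left _ _
    linarith [sq_nonneg ‖h • (vEmp f u (Y j) Y - vEmp f u (Y k) Y)‖,
      mul_le_mul_of_nonneg_left hvjk h0.le,
      mul_nonneg (sub_nonneg.mpr hζge) (mul_nonneg h0.le (sq_nonneg ‖Y j - Y k‖))]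
  -- norms do not grow too much
  have hnormX : ∀ j, ‖Y j‖ ^ 2 - 2 * h * ⟪Y j, vEmp f u (Y j) Y⟫ ≤ ‖X j‖ ^ 2 := by
    intro j
    have hexp := norm_sub_sq_real (Y j) (h • vEmp f u (Y j) Y)
    rw [hXeq j, hexp, real_inner_smul_right]
    linarith [sq_nonneg ‖h • vEmp f u (Y j) Y‖]
  set SY := ∑ j, ‖Y j‖ ^ 2 with hSYdef
  set SX := ∑ j, ‖X j‖ ^ 2 with hSXdef
  have hSY0 : 0 ≤ SY := Finset.sum_nonneg fun j _ => by positivity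
  have hSX0 : 0 ≤ SX := Finset.sum_nonneg fun j _ => by positivity
  have hSX : (1 - ζ * h) * SY - 2 * h * (N : ℝ) * Cu ≤ SX := by
    set T := ∑ j, ⟪Y j, vEmp f u (Y j) Y⟫ with hTdef
    have hsum := Finset.sum_le_sum fun j (_ : j ∈ Finset.univ) => hnormX j
    rw [Finset.sum_sub_distrib, ← Finset.mul_sum, ← hTdef, ← hSYdef, ← hSXdef] at hsum
    have hcoer := vEmp_coercive hN f u Lf Lu Lut Cu hodd hf0 hf hucoer Y
    rw [← hTdef, ← hSYdef] at hcoer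
    have hζ2 : 2 * (2 * max Lf 0 + Lu + Lut + 1/2) ≤ ζ := by
      have : 4 * max Lf 0 + 2 * Lu + 2 * Lut + 1 ≤ ζ :=
        le_trans (le_max_left _ _) (le_max_right _ _)
      linarith
    linarith [mul_le_mul_of_nonneg_left hcoer (by linarith : (0:ℝ) ≤ 2 * h),
      mul_nonneg (sub_nonneg.mpr hζ2) (mul_nonneg h0.le hSY0)]
  have esum : ∀ Z : Fin N → EuclideanSpace ℝ (Fin d),
      (N : ℝ)⁻¹ * ∑ j, (1 + ‖Z j‖ ^ 2) = 1 + (N : ℝ)⁻¹ * ∑ j, ‖Z j‖ ^ 2 := by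
    intro Z
    rw [Finset.sum_add_distrib, Finset.sum_const, Finset.card_univ, Fintype.card_fin,
      nsmul_eq_mul, mul_one, mul_add, inv_mul_cancel₀ hNne]
  set AY := (N : ℝ)⁻¹ * ∑ j, (1 + ‖Y j‖ ^ 2) with hAYdef
  set AX := (N : ℝ)⁻¹ * ∑ j, (1 + ‖X j‖ ^ 2) with hAXdef
  have hAYe : AY = 1 + (N : ℝ)⁻¹ * SY := by rw [hAYdef, esum Y, ← hSYdef]
  have hAXe : AX = 1 + (N : ℝ)⁻¹ * SX := by rw [hAXdef, esum X, ← hSXdef]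
  have hAY1 : 1 ≤ AY := by
    rw [hAYe]
    have : 0 ≤ (N : ℝ)⁻¹ * SY := mul_nonneg (inv_nonneg.mpr hNpos.le) hSY0
    linarith
  have hAX1 : 1 ≤ AX := by
    rw [hAXe]
    have : 0 ≤ (N : ℝ)⁻¹ * SX := mul_nonneg (inv_nonneg.mpr hNpos.le) hSX0
    linarith
  have hA : (1 - ζ * h) * AY - 2 * Cu * h ≤ AX := by
    rw [hAYe, hAXe]
    have t0 := mul_le_mul_of_nonneg_left hSX (inv_nonneg.mpr hNpos.le)
    have expand : (N : ℝ)⁻¹ * ((1 - ζ * h) * SY - 2 * h * (N : ℝ) * Cu)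
        = (1 - ζ * h) * ((N : ℝ)⁻¹ * SY) - 2 * Cu * h := by
      field_simp
    rw [expand] at t0
    have hζh0 : 0 ≤ ζ * h := mul_nonneg hζ0 h0.le
    have hq0 : 0 ≤ ζ * h * ((N : ℝ)⁻¹ * SY) :=
      mul_nonneg hζh0 (mul_nonneg (inv_nonneg.mpr hNpos.le) hSY0)
    linarith [t0, hq0]
  set Q := (1 - ζ * h)⁻¹ * (1 + 2 * Cu * h) with hQdef
  have hQ1 : 1 ≤ Q := by
    have hle : 1 - ζ * h ≤ 1 + 2 * Cu * h := by linarith [mul_nonneg hζ0 h0.le, mul_nonneg hCu h0.le]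
    calc (1:ℝ) = (1 - ζ * h)⁻¹ * (1 - ζ * h) := (inv_mul_cancel₀ hpos.ne').symm
      _ ≤ Q := mul_le_mul_of_nonneg_left hle (inv_nonneg.mpr hpos.le)
  have hQ0 : 0 ≤ Q := by linarith
  have hQA : AY ≤ Q * AX := by
    have step : (1 - ζ * h) * AY ≤ (1 + 2 * Cu * h) * AX := by
      linarith [hA, mul_nonneg (mul_nonneg hCu h0.le) (by linarith : (0:ℝ) ≤ AX - 1),
        mul_nonneg (mul_nonneg hζ0 h0.le) (by linarith : (0:ℝ) ≤ AY)]
    calc AY = (1 - ζ * h)⁻¹ * ((1 - ζ * h) * AY) := by field_simp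
      _ ≤ (1 - ζ * h)⁻¹ * ((1 + 2 * Cu * h) * AX) :=
          mul_le_mul_of_nonneg_left step (inv_nonneg.mpr hpos.le)
      _ = Q * AX := by rw [hQdef]; ring
  have hQdiff : ∀ j k, ‖Y j - Y k‖ ^ 2 ≤ Q * ‖X j - X k‖ ^ 2 := by
    intro j k
    have hinv : ‖Y j - Y k‖ ^ 2 ≤ (1 - ζ * h)⁻¹ * ‖X j - X k‖ ^ 2 := by
      calc ‖Y j - Y k‖ ^ 2 = (1 - ζ * h)⁻¹ * ((1 - ζ * h) * ‖Y j - Y k‖ ^ 2) := by field_simp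
        _ ≤ (1 - ζ * h)⁻¹ * ‖X j - X k‖ ^ 2 :=
            mul_le_mul_of_nonneg_left (hdiff j k) (inv_nonneg.mpr hpos.le)
    have hinvQ : (1 - ζ * h)⁻¹ ≤ Q := by
      calc (1 - ζ * h)⁻¹ = (1 - ζ * h)⁻¹ * 1 := (mul_one _).symm
        _ ≤ Q := mul_le_mul_of_nonneg_left
            (by linarith [mul_nonneg hCu h0.le] : (1:ℝ) ≤ 1 + 2 * Cu * h)
            (inv_nonneg.mpr hpos.le)
    calc ‖Y j - Y k‖ ^ 2 ≤ (1 - ζ * h)⁻¹ * ‖X j - X k‖ ^ 2 := hinv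
      _ ≤ Q * ‖X j - X k‖ ^ 2 := mul_le_mul_of_nonneg_right hinvQ (by positivity)
  have hQD : Q ≤ 1 + D * h := by
    have hDineq : ζ + 2 * Cu ≤ D * (1 - ζ * h) := by
      linarith [mul_nonneg hD0 (sub_nonneg.mpr hζh), hDmul]
    have key : 1 + 2 * Cu * h ≤ (1 + D * h) * (1 - ζ * h) := by
      nlinarith [mul_nonneg h0.le (sub_nonneg.mpr hDineq), hDineq]
    calc Q = (1 + 2 * Cu * h) * (1 - ζ * h)⁻¹ := by rw [hQdef]; ring
      _ ≤ ((1 + D * h) * (1 - ζ * h)) * (1 - ζ * h)⁻¹ :=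
          mul_le_mul_of_nonneg_right key (inv_nonneg.mpr hpos.le)
      _ = 1 + D * h := by rw [mul_assoc, mul_inv_cancel₀ hpos.ne', mul_one]
  have hQp1 : 1 ≤ Q ^ p := one_le_pow₀ hQ1
  have hQpC : Q ^ p ≤ 1 + ((1 + D) ^ p - 1) * h :=
    le_trans (pow_le_pow_left₀ hQ0 hQD p) (aux_pow_bound D hD0 p h h0.le h1)
  -- sums of powers
  have hSp : (N : ℝ)⁻¹ * ∑ j, ‖Y i - Y j‖ ^ (2 * p)
      ≤ Q ^ p * ((N : ℝ)⁻¹ * ∑ j, ‖X i - X j‖ ^ (2 * p)) := by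
    have hterm : ∀ j, ‖Y i - Y j‖ ^ (2 * p) ≤ Q ^ p * ‖X i - X j‖ ^ (2 * p) := by
      intro j
      rw [pow_mul, pow_mul]
      calc (‖Y i - Y j‖ ^ 2) ^ p ≤ (Q * ‖X i - X j‖ ^ 2) ^ p :=
            pow_le_pow_left₀ (by positivity) (hQdiff i j) p
        _ = Q ^ p * (‖X i - X j‖ ^ 2) ^ p := mul_pow _ _ _
    calc (N : ℝ)⁻¹ * ∑ j, ‖Y i - Y j‖ ^ (2 * p)
        ≤ (N : ℝ)⁻¹ * ∑ j, Q ^ p * ‖X i - X j‖ ^ (2 * p) :=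
          mul_le_mul_of_nonneg_left (Finset.sum_le_sum fun j _ => hterm j)
            (inv_nonneg.mpr hNpos.le)
      _ = Q ^ p * ((N : ℝ)⁻¹ * ∑ j, ‖X i - X j‖ ^ (2 * p)) := by
          rw [← Finset.mul_sum]; ring
  have hAp : AY ^ p ≤ Q ^ p * AX ^ p := by
    calc AY ^ p ≤ (Q * AX) ^ p := pow_le_pow_left₀ (by linarith) hQA p
      _ = Q ^ p * AX ^ p := mul_pow _ _ _
  -- conclusion
  have hSXp0 : 0 ≤ (N : ℝ)⁻¹ * ∑ j, ‖X i - X j‖ ^ (2 * p) := by positivity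
  have hAXp0 : 0 ≤ AX ^ p := pow_nonneg (by linarith) p
  have h4 : (0:ℝ) ≤ 4 ^ p := by positivity
  have e1 : (4:ℝ) ^ p * ((N : ℝ)⁻¹ * ∑ j, ‖Y i - Y j‖ ^ (2 * p))
      ≤ Q ^ p * ((4:ℝ) ^ p * ((N : ℝ)⁻¹ * ∑ j, ‖X i - X j‖ ^ (2 * p))) := by
    calc (4:ℝ) ^ p * ((N : ℝ)⁻¹ * ∑ j, ‖Y i - Y j‖ ^ (2 * p))
        ≤ (4:ℝ) ^ p * (Q ^ p * ((N : ℝ)⁻¹ * ∑ j, ‖X i - X j‖ ^ (2 * p))) :=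
          mul_le_mul_of_nonneg_left hSp h4
      _ = Q ^ p * ((4:ℝ) ^ p * ((N : ℝ)⁻¹ * ∑ j, ‖X i - X j‖ ^ (2 * p))) := by ring
  have e2 : (4:ℝ) ^ p * AY ^ p ≤ Q ^ p * ((4:ℝ) ^ p * AX ^ p) := by
    calc (4:ℝ) ^ p * AY ^ p ≤ (4:ℝ) ^ p * (Q ^ p * AX ^ p) := mul_le_mul_of_nonneg_left hAp h4
      _ = Q ^ p * ((4:ℝ) ^ p * AX ^ p) := by ring
  have expand : Q ^ p * ((4:ℝ) ^ p * ((N : ℝ)⁻¹ * ∑ j, ‖X i - X j‖ ^ (2 * p))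
        + (4:ℝ) ^ p * AX ^ p + 1)
      = Q ^ p * ((4:ℝ) ^ p * ((N : ℝ)⁻¹ * ∑ j, ‖X i - X j‖ ^ (2 * p)))
        + Q ^ p * ((4:ℝ) ^ p * AX ^ p) + Q ^ p := by ring
  have hRHS0 : 0 ≤ (4:ℝ) ^ p * ((N : ℝ)⁻¹ * ∑ j, ‖X i - X j‖ ^ (2 * p))
      + (4:ℝ) ^ p * AX ^ p + 1 := by
    have := mul_nonneg h4 hSXp0
    have := mul_nonneg h4 hAXp0
    linarith
  calc (4:ℝ) ^ p * ((N : ℝ)⁻¹ * ∑ j, ‖Y i - Y j‖ ^ (2 * p)) + (4:ℝ) ^ p * AY ^ p + 1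
      ≤ Q ^ p * ((4:ℝ) ^ p * ((N : ℝ)⁻¹ * ∑ j, ‖X i - X j‖ ^ (2 * p))
          + (4:ℝ) ^ p * AX ^ p + 1) := by
        rw [expand]; linarith [e1, e2, hQp1]
    _ ≤ (1 + ((1 + D) ^ p - 1) * h) * ((4:ℝ) ^ p * ((N : ℝ)⁻¹ * ∑ j, ‖X i - X j‖ ^ (2 * p))
          + (4:ℝ) ^ p * AX ^ p + 1) := mul_le_mul_of_nonneg_right hQpC hRHS0
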